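/- For every real c, the sublevel set { 𝐏 : 𝐏_k ≥ 0 for all k and S(𝐏, 𝐐) ≤ c } is a compact subset of the space of real arrays on the finite product index set. -/
import Mathlib


open scoped BigOperators

lemma entropy_term_lb (q x : ℝ) (hq : 0 < q) (hx : 0 ≤ x) :
    -q ≤ x * (Real.log (x / q) - 1) := by
  rcases hx.eq_or_lt with h | h
  · simp [← h]; linarith
  · have h1 : Real.log (q / x) ≤ q / x - 1 :=
      Real.log_le_sub_one_of_pos (by positivity)
    have h2 : Real.log (q / x) = -Real.log (x / q) := by
      rw [← Real.log_inv, inv_div]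
    have h3 : x * Real.log (q / x) ≤ x * (q / x - 1) :=
      mul_le_mul_of_nonneg_left h1 h.le
    have h4 : x * (q / x) = q := by field_simp
    rw [h2] at h3
    nlinarith

lemma entropy_coercive (q x C : ℝ) (hq : 0 < q) (hx : 0 ≤ x)
    (h : x * (Real.log (x / q) - 1) ≤ C) : x ≤ max C (q * Real.exp 2) := by
  rcases le_or_gt x (q * Real.exp 2) with h' | h'
  · exact le_max_of_le_right h'
  · have hx0 : 0 < x := lt_of_le_of_lt (by positivity) h'
    have hlog : (2:ℝ) ≤ Real.log (x / q) := by
      rw [Real.le_log_iff_exp_le (by positivity), le_div_iff₀ hq]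
      linarith
    have hxx : x ≤ x * (Real.log (x / q) - 1) := by nlinarith
    exact le_max_of_le_left (hxx.trans h)

/-- For every real `c`, the sublevel set
`{𝐏 : 𝐏 ≥ 0 entrywise and S(𝐏, 𝐐) ≤ c}` of the entropy functional is a compact subset
of the space of real arrays on the finite product index set. -/
theorem entropy_sublevel_set_isCompact
    (n : ℕ) (I : Fin n → Type)
    [∀ ℓ, Fintype (I ℓ)] [∀ ℓ, Nonempty (I ℓ)]
    (Q : (∀ ℓ, I ℓ) → ℝ) (hQ : ∀ k, 0 < Q k) (c : ℝ) :
    IsCompact {P : (∀ ℓ, I ℓ) → ℝ | (∀ k, 0 ≤ P k) ∧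
      ∑ k : ∀ ℓ, I ℓ, P k * (Real.log (P k / Q k) - 1) ≤ c} := by
  classical
  set C : ℝ := c + ∑ j : ∀ ℓ, I ℓ, Q j with hC
  -- continuity of the entropy functional
  have hcont : Continuous fun P : (∀ ℓ, I ℓ) → ℝ =>
      ∑ k : ∀ ℓ, I ℓ, P k * (Real.log (P k / Q k) - 1) := by
    apply continuous_finset_sum
    intro k _
    have h : (fun P : (∀ ℓ, I ℓ) → ℝ => P k * (Real.log (P k / Q k) - 1))
        = fun P => (P k * Real.log (P k)) - P k * Real.log (Q k) - P k := by
      funext P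
      rcases eq_or_ne (P k) 0 with h0 | h0
      · simp [h0]
      · rw [Real.log_div h0 (hQ k).ne']; ring
    rw [h]
    exact ((Real.continuous_mul_log.comp (continuous_apply k)).sub
      ((continuous_apply k).mul continuous_const)).sub (continuous_apply k)
  have hclosed : IsClosed {P : (∀ ℓ, I ℓ) → ℝ | (∀ k, 0 ≤ P k) ∧
      ∑ k : ∀ ℓ, I ℓ, P k * (Real.log (P k / Q k) - 1) ≤ c} := by
    rw [Set.setOf_and]
    apply IsClosed.inter
    · have : {P : (∀ ℓ, I ℓ) → ℝ | ∀ k, 0 ≤ P k}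
          = ⋂ k, {P : (∀ ℓ, I ℓ) → ℝ | 0 ≤ P k} := by
        ext P; simp [Set.mem_iInter]
      rw [this]
      exact isClosed_iInter fun k =>
        isClosed_le continuous_const (continuous_apply k)
    · exact isClosed_le hcont continuous_const
  apply IsCompact.of_isClosed_subset
    (isCompact_univ_pi fun k => isCompact_Icc (a := (0:ℝ))
      (b := max C (Q k * Real.exp 2)))
    hclosed
  intro P hP
  obtain ⟨hP0, hPc⟩ := hP
  rw [Set.mem_univ_pi]
  intro k
  refine ⟨hP0 k, ?_⟩
  have key : P k * (Real.log (P k / Q k) - 1) ≤ C := by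
    have h1 : P k * (Real.log (P k / Q k) - 1) + Q k
        ≤ ∑ j : ∀ ℓ, I ℓ, (P j * (Real.log (P j / Q j) - 1) + Q j) := by
      apply Finset.single_le_sum (f := fun j => P j * (Real.log (P j / Q j) - 1) + Q j)
        (fun j _ => by linarith [entropy_term_lb (Q j) (P j) (hQ j) (hP0 j)])
        (Finset.mem_univ k)
    rw [Finset.sum_add_distrib] at h1
    have := hQ k
    simp only [hC]
    linarith
  exact entropy_coercive (Q k) (P k) C (hQ k) (hP0 k) key
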